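/- Let Ω ⊆ ℝⁿ be a nonempty measurable set, K an admissible kernel, ρ a recognition function, and u₀ : Ω → ℝ bounded and continuous. Then there exists τ > 0 such that there is exactly one bounded continuous u : Ω × [0,τ] → ℝ satisfying u(x,t) = u₀(x) + ∫₀ᵗ g[u](x,s) ds for all (x,t) ∈ Ω × [0,τ]. -/

import Mathlib

open MeasureTheory Set



open MeasureTheory Set Filter Topology BoundedContinuousFunction

set_option linter.unusedSectionVars false

namespace S2Aux

variable {α : Type*} [MeasurableSpace α] [TopologicalSpace α] [OpensMeasurableSpace α]
  [FirstCountableTopology α]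
  {μ : Measure α} {Ω : Set α}

/-- clamp function -/
def clamp (R z : ℝ) : ℝ := max (-R) (min R z)

lemma clamp_abs_le {R : ℝ} (hR : 0 ≤ R) (z : ℝ) : |clamp R z| ≤ R := by
  rw [abs_le]
  constructor
  · exact le_max_left _ _
  · exact max_le (by linarith) (min_le_left _ _)

lemma clamp_lip (R a b : ℝ) : |clamp R a - clamp R b| ≤ |a - b| := by
  unfold clamp
  calc |max (-R) (min R a) - max (-R) (min R b)| ≤ |min R a - min R b| := by
        rw [max_comm (-R) (min R a), max_comm (-R) (min R b)]
        exact abs_max_sub_max_le_abs _ _ _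
    _ ≤ |a - b| := by
        rcases abs_min_sub_min_le_max R a R b with h
        simpa using h.trans (by simp [abs_nonneg])

lemma clamp_eq_self {R z : ℝ} (hz : |z| ≤ R) : clamp R z = z := by
  rw [abs_le] at hz
  unfold clamp
  rw [min_eq_right hz.2, max_eq_right hz.1]

lemma continuous_clamp (R : ℝ) : Continuous (clamp R) :=
  continuous_const.max (continuous_const.min continuous_id)

/-- Basic integrability of `y ↦ g y * ψ y` for `g` integrable and `ψ` bounded measurable. -/
lemma intA {g : α → ℝ} (hg : Measurable g) (hgint : IntegrableOn g Ω μ)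
    (hΩmeas : MeasurableSet Ω)
    {ψ : α → ℝ} (hψ : AEMeasurable ψ (μ.restrict Ω)) {c : ℝ}
    (hψb : ∀ y ∈ Ω, |ψ y| ≤ c) :
    IntegrableOn (fun y => g y * ψ y) Ω μ := by
  apply Integrable.mono' (hgint.abs.const_mul c)
  · exact (hg.aemeasurable.restrict.mul hψ).aestronglyMeasurable
  · filter_upwards [ae_restrict_mem hΩmeas] with y hy
    rw [Real.norm_eq_abs, abs_mul]
    calc |g y| * |ψ y| ≤ |g y| * c := by
          exact mul_le_mul_of_nonneg_left (hψb y hy) (abs_nonneg _)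
      _ = c * |g y| := mul_comm _ _

/-- Basic bound on `∫ g ψ`. -/
lemma bndA {g : α → ℝ} (hg : Measurable g) (hgint : IntegrableOn g Ω μ)
    (hΩmeas : MeasurableSet Ω)
    {ψ : α → ℝ} (hψ : AEMeasurable ψ (μ.restrict Ω)) {c : ℝ} (hc : 0 ≤ c)
    (hψb : ∀ y ∈ Ω, |ψ y| ≤ c) :
    |∫ y in Ω, g y * ψ y ∂μ| ≤ c * ∫ y in Ω, |g y| ∂μ := by
  have habs : IntegrableOn (fun y => |g y| * |ψ y|) Ω μ := by
    simpa [abs_mul, IntegrableOn] using (intA hg hgint hΩmeas hψ hψb).abs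
  calc |∫ y in Ω, g y * ψ y ∂μ| ≤ ∫ y in Ω, |g y| * |ψ y| ∂μ := by
        simpa [Real.norm_eq_abs, abs_mul] using
          norm_integral_le_integral_norm (μ := μ.restrict Ω) (fun y => g y * ψ y)
    _ ≤ ∫ y in Ω, c * |g y| ∂μ := by
        apply setIntegral_mono_on habs (hgint.abs.const_mul c) hΩmeas
        intro y hy
        calc |g y| * |ψ y| ≤ |g y| * c :=
              mul_le_mul_of_nonneg_left (hψb y hy) (abs_nonneg _)
          _ = c * |g y| := mul_comm _ _
    _ = c * ∫ y in Ω, |g y| ∂μ := integral_const_mul _ _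


section G

variable {K : α → α → ℝ} {σ : ℝ → ℝ} {τ : ℝ} {f : α × ℝ → ℝ}

/-- The nonlocal operator. -/
noncomputable def Gop (μ : Measure α) (Ω : Set α) (K : α → α → ℝ) (σ : ℝ → ℝ)
    (f : α × ℝ → ℝ) (x : α) (s : ℝ) : ℝ :=
  ∫ y in Ω, K x y * σ (f (x, s) - f (y, s)) ∂μ

lemma psi_meas (hΩmeas : MeasurableSet Ω) (hσc : Continuous σ)
    (hf : ContinuousOn f (Ω ×ˢ Icc 0 τ)) {s : ℝ} (hs : s ∈ Icc 0 τ) (a : ℝ) :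
    AEMeasurable (fun y => σ (a - f (y, s))) (μ.restrict Ω) := by
  have h1 : ContinuousOn (fun y : α => f (y, s)) Ω := by
    apply hf.comp ((continuous_id.prodMk continuous_const).continuousOn)
    intro y hy
    exact mk_mem_prod hy hs
  exact (hσc.comp_continuousOn (continuousOn_const.sub h1)).aemeasurable hΩmeas

lemma G_integrable (hΩmeas : MeasurableSet Ω) {x : α} (hKx : Measurable (K x))
    (hKxint : IntegrableOn (K x) Ω μ) (hσc : Continuous σ) {Cσ : ℝ}
    (hσb : ∀ z, |σ z| ≤ Cσ) (hf : ContinuousOn f (Ω ×ˢ Icc 0 τ)) {s : ℝ}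
    (hs : s ∈ Icc 0 τ) :
    IntegrableOn (fun y => K x y * σ (f (x, s) - f (y, s))) Ω μ :=
  intA hKx hKxint hΩmeas (psi_meas hΩmeas hσc hf hs _) (fun y _ => hσb _)

lemma int_abs_eq {x : α} (hKnn : ∀ y, 0 ≤ K x y) :
    (∫ y in Ω, |K x y| ∂μ) = ∫ y in Ω, K x y ∂μ := by
  congr 1
  funext y
  exact abs_of_nonneg (hKnn y)

lemma G_bound (hΩmeas : MeasurableSet Ω) {x : α} (hKx : Measurable (K x))
    (hKxint : IntegrableOn (K x) Ω μ) (hKnn : ∀ y, 0 ≤ K x y)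
    {D : ℝ} (hDx : (∫ y in Ω, K x y ∂μ) ≤ D)
    (hσc : Continuous σ) {Cσ : ℝ} (hCσ : 0 ≤ Cσ)
    (hσb : ∀ z, |σ z| ≤ Cσ) (hf : ContinuousOn f (Ω ×ˢ Icc 0 τ)) {s : ℝ}
    (hs : s ∈ Icc 0 τ) :
    |Gop μ Ω K σ f x s| ≤ Cσ * D := by
  calc |Gop μ Ω K σ f x s| ≤ Cσ * ∫ y in Ω, |K x y| ∂μ :=
        bndA hKx hKxint hΩmeas (psi_meas hΩmeas hσc hf hs _) hCσ (fun y _ => hσb _)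
    _ ≤ Cσ * D := by
        rw [int_abs_eq hKnn]
        exact mul_le_mul_of_nonneg_left hDx hCσ

/-- Contraction-type estimate for the difference of two `Gop`'s. -/
lemma G_diff (hΩmeas : MeasurableSet Ω) {x : α} (hKx : Measurable (K x))
    (hKxint : IntegrableOn (K x) Ω μ) (hKnn : ∀ y, 0 ≤ K x y)
    {D : ℝ} (hDx : (∫ y in Ω, K x y ∂μ) ≤ D) (hD0 : 0 ≤ D)
    (hσc : Continuous σ) {Cσ : ℝ} (hσb : ∀ z, |σ z| ≤ Cσ)
    {Lσ : ℝ} (hLσ : 0 ≤ Lσ) (hσl : ∀ a b, |σ a - σ b| ≤ Lσ * |a - b|)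
    {g : α × ℝ → ℝ} (hf : ContinuousOn f (Ω ×ˢ Icc 0 τ))
    (hg : ContinuousOn g (Ω ×ˢ Icc 0 τ)) {s : ℝ} (hs : s ∈ Icc 0 τ)
    {δ : ℝ} (hδ : 0 ≤ δ) (hx : x ∈ Ω)
    (hfg : ∀ z ∈ Ω, |f (z, s) - g (z, s)| ≤ δ) :
    |Gop μ Ω K σ f x s - Gop μ Ω K σ g x s| ≤ Lσ * (2 * δ) * D := by
  have h1 := G_integrable (μ := μ) hΩmeas hKx hKxint hσc hσb hf hs
  have h2 := G_integrable (μ := μ) hΩmeas hKx hKxint hσc hσb hg hs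
  have hδψ : ∀ z ∈ Ω,
      |σ (f (x, s) - f (z, s)) - σ (g (x, s) - g (z, s))| ≤ Lσ * (2 * δ) := by
    intro z hz
    calc |σ (f (x, s) - f (z, s)) - σ (g (x, s) - g (z, s))|
        ≤ Lσ * |(f (x, s) - f (z, s)) - (g (x, s) - g (z, s))| := hσl _ _
      _ ≤ Lσ * (2 * δ) := by
          apply mul_le_mul_of_nonneg_left _ hLσ
          calc |(f (x, s) - f (z, s)) - (g (x, s) - g (z, s))|
              = |(f (x, s) - g (x, s)) - (f (z, s) - g (z, s))| := by ring_nf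
            _ ≤ |f (x, s) - g (x, s)| + |f (z, s) - g (z, s)| := abs_sub _ _
            _ ≤ δ + δ := add_le_add (hfg x hx) (hfg z hz)
            _ = 2 * δ := by ring
  have hmeasdiff : AEMeasurable
      (fun y => σ (f (x, s) - f (y, s)) - σ (g (x, s) - g (y, s))) (μ.restrict Ω) :=
    (psi_meas hΩmeas hσc hf hs _).sub (psi_meas hΩmeas hσc hg hs _)
  have key : Gop μ Ω K σ f x s - Gop μ Ω K σ g x s =
      ∫ y in Ω, K x y * (σ (f (x, s) - f (y, s)) - σ (g (x, s) - g (y, s))) ∂μ := by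
    unfold Gop
    rw [← integral_sub h1 h2]
    congr 1
    funext y
    ring
  rw [key]
  calc |∫ y in Ω, K x y * (σ (f (x, s) - f (y, s)) - σ (g (x, s) - g (y, s))) ∂μ|
      ≤ (Lσ * (2 * δ)) * ∫ y in Ω, |K x y| ∂μ :=
        bndA hKx hKxint hΩmeas hmeasdiff
          (by positivity) hδψ
    _ ≤ Lσ * (2 * δ) * D := by
        rw [int_abs_eq hKnn]
        exact mul_le_mul_of_nonneg_left hDx (by positivity)


/-- Continuity of `s ↦ Gop f x s` on `[0, τ]`. -/
lemma G_cont_s (hΩmeas : MeasurableSet Ω) {x : α} (hKx : Measurable (K x))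
    (hKxint : IntegrableOn (K x) Ω μ) (hKnn : ∀ y, 0 ≤ K x y)
    (hσc : Continuous σ) {Cσ : ℝ} (hσb : ∀ z, |σ z| ≤ Cσ)
    (hf : ContinuousOn f (Ω ×ˢ Icc 0 τ)) (hx : x ∈ Ω) :
    ContinuousOn (fun s => Gop μ Ω K σ f x s) (Icc 0 τ) := by
  intro s₀ hs₀
  have hfxcont : ∀ z ∈ Ω, ContinuousWithinAt (fun s => f (z, s)) (Icc 0 τ) s₀ := by
    intro z hz
    apply (hf.comp ((continuous_const.prodMk continuous_id).continuousOn)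
      (fun s hs => mk_mem_prod hz hs)) s₀ hs₀
  unfold Gop
  apply tendsto_integral_filter_of_dominated_convergence (fun y => Cσ * K x y)
  · filter_upwards [self_mem_nhdsWithin] with s hs
    exact ((hKx.aemeasurable.restrict.mul
      (psi_meas hΩmeas hσc hf hs _)).aestronglyMeasurable)
  · filter_upwards [self_mem_nhdsWithin] with s hs
    filter_upwards with y
    rw [Real.norm_eq_abs, abs_mul, abs_of_nonneg (hKnn y)]
    calc K x y * |σ (f (x, s) - f (y, s))| ≤ K x y * Cσ :=
          mul_le_mul_of_nonneg_left (hσb _) (hKnn y)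
      _ = Cσ * K x y := mul_comm _ _
  · exact hKxint.const_mul Cσ
  · filter_upwards [ae_restrict_mem hΩmeas] with y hy
    apply Tendsto.const_mul
    apply (hσc.continuousAt.tendsto).comp
    exact ((hfxcont x hx).sub (hfxcont y hy))

/-- Continuity of `x ↦ Gop f x s` within `Ω`. -/
lemma G_cont_x (hΩmeas : MeasurableSet Ω)
    (hKx : ∀ x, Measurable (K x)) (hKint : ∀ x ∈ Ω, IntegrableOn (K x) Ω μ)
    (hKnn : ∀ x y, 0 ≤ K x y) {D : ℝ} (hD : ∀ x ∈ Ω, (∫ y in Ω, K x y ∂μ) ≤ D)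
    {x₀ : α} (hx₀ : x₀ ∈ Ω)
    (hKtend : Tendsto (fun x => ∫ y in Ω, |K x y - K x₀ y| ∂μ) (𝓝[Ω] x₀) (𝓝 0))
    (hσc : Continuous σ) {Cσ : ℝ} (hCσ : 0 ≤ Cσ) (hσb : ∀ z, |σ z| ≤ Cσ)
    {Lσ : ℝ} (hLσ : 0 ≤ Lσ) (hσl : ∀ a b, |σ a - σ b| ≤ Lσ * |a - b|)
    (hf : ContinuousOn f (Ω ×ˢ Icc 0 τ)) {s : ℝ} (hs : s ∈ Icc 0 τ) :
    Tendsto (fun x => Gop μ Ω K σ f x s) (𝓝[Ω] x₀) (𝓝 (Gop μ Ω K σ f x₀ s)) := by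
  have hfx : Tendsto (fun x => f (x, s)) (𝓝[Ω] x₀) (𝓝 (f (x₀, s))) := by
    have h1 : Tendsto (fun x : α => (x, s)) (𝓝[Ω] x₀) (𝓝[Ω ×ˢ Icc 0 τ] (x₀, s)) := by
      apply tendsto_nhdsWithin_of_tendsto_nhds_of_eventually_within
      · exact ((continuous_id.prodMk continuous_const).tendsto x₀).mono_left
          nhdsWithin_le_nhds
      · filter_upwards [self_mem_nhdsWithin] with x hx
        exact mk_mem_prod hx hs
    exact Filter.Tendsto.comp (hf (x₀, s) (mk_mem_prod hx₀ hs)) h1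
  -- key estimate
  have hkey : ∀ x ∈ Ω, |Gop μ Ω K σ f x s - Gop μ Ω K σ f x₀ s| ≤
      Cσ * (∫ y in Ω, |K x y - K x₀ y| ∂μ) + Lσ * D * |f (x, s) - f (x₀, s)| := by
    intro x hx
    have hi1 : IntegrableOn (fun y => (K x y - K x₀ y) * σ (f (x, s) - f (y, s))) Ω μ :=
      intA ((hKx x).sub (hKx x₀)) ((hKint x hx).sub (hKint x₀ hx₀)) hΩmeas
        (psi_meas hΩmeas hσc hf hs _) (fun y _ => hσb _)
    have hi2 : IntegrableOn (fun y => K x₀ y * σ (f (x, s) - f (y, s))) Ω μ :=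
      intA (hKx x₀) (hKint x₀ hx₀) hΩmeas (psi_meas hΩmeas hσc hf hs _)
        (fun y _ => hσb _)
    have hi3 : IntegrableOn (fun y => K x₀ y * σ (f (x₀, s) - f (y, s))) Ω μ :=
      intA (hKx x₀) (hKint x₀ hx₀) hΩmeas (psi_meas hΩmeas hσc hf hs _)
        (fun y _ => hσb _)
    have hGx : IntegrableOn (fun y => K x y * σ (f (x, s) - f (y, s))) Ω μ :=
      intA (hKx x) (hKint x hx) hΩmeas (psi_meas hΩmeas hσc hf hs _) (fun y _ => hσb _)
    have hi4 : IntegrableOn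
        (fun y => K x₀ y * (σ (f (x, s) - f (y, s)) - σ (f (x₀, s) - f (y, s)))) Ω μ := by
      simpa [mul_sub, Pi.sub_def] using hi2.sub hi3
    have hsplit : Gop μ Ω K σ f x s - Gop μ Ω K σ f x₀ s =
        (∫ y in Ω, (K x y - K x₀ y) * σ (f (x, s) - f (y, s)) ∂μ) +
        ∫ y in Ω, K x₀ y * (σ (f (x, s) - f (y, s)) - σ (f (x₀, s) - f (y, s))) ∂μ := by
      unfold Gop
      rw [← integral_sub hGx hi3, ← integral_add hi1 hi4]
      congr 1
      funext y
      ring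
    rw [hsplit]
    have hb1 : |∫ y in Ω, (K x y - K x₀ y) * σ (f (x, s) - f (y, s)) ∂μ| ≤
        Cσ * ∫ y in Ω, |K x y - K x₀ y| ∂μ :=
      bndA ((hKx x).sub (hKx x₀)) ((hKint x hx).sub (hKint x₀ hx₀)) hΩmeas
        (psi_meas hΩmeas hσc hf hs _) hCσ (fun y _ => hσb _)
    have hb2 : |∫ y in Ω, K x₀ y * (σ (f (x, s) - f (y, s)) - σ (f (x₀, s) - f (y, s))) ∂μ| ≤
        Lσ * D * |f (x, s) - f (x₀, s)| := by
      have hψb : ∀ y ∈ Ω, |σ (f (x, s) - f (y, s)) - σ (f (x₀, s) - f (y, s))| ≤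
          Lσ * |f (x, s) - f (x₀, s)| := by
        intro y _
        calc |σ (f (x, s) - f (y, s)) - σ (f (x₀, s) - f (y, s))|
            ≤ Lσ * |(f (x, s) - f (y, s)) - (f (x₀, s) - f (y, s))| := hσl _ _
          _ = Lσ * |f (x, s) - f (x₀, s)| := by ring_nf
      calc |∫ y in Ω, K x₀ y * (σ (f (x, s) - f (y, s)) - σ (f (x₀, s) - f (y, s))) ∂μ|
          ≤ (Lσ * |f (x, s) - f (x₀, s)|) * ∫ y in Ω, |K x₀ y| ∂μ :=
            bndA (hKx x₀) (hKint x₀ hx₀) hΩmeas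
              ((psi_meas hΩmeas hσc hf hs _).sub (psi_meas hΩmeas hσc hf hs _))
              (by positivity) hψb
        _ ≤ (Lσ * |f (x, s) - f (x₀, s)|) * D := by
              rw [int_abs_eq (hKnn x₀)]
              exact mul_le_mul_of_nonneg_left (hD x₀ hx₀) (by positivity)
        _ = Lσ * D * |f (x, s) - f (x₀, s)| := by ring
    calc |(∫ y in Ω, (K x y - K x₀ y) * σ (f (x, s) - f (y, s)) ∂μ) +
        ∫ y in Ω, K x₀ y * (σ (f (x, s) - f (y, s)) - σ (f (x₀, s) - f (y, s))) ∂μ|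
        ≤ |∫ y in Ω, (K x y - K x₀ y) * σ (f (x, s) - f (y, s)) ∂μ| +
          |∫ y in Ω, K x₀ y * (σ (f (x, s) - f (y, s)) - σ (f (x₀, s) - f (y, s))) ∂μ| :=
          abs_add_le _ _
      _ ≤ _ := add_le_add hb1 hb2
  -- squeeze
  have hbound : Tendsto (fun x => Cσ * (∫ y in Ω, |K x y - K x₀ y| ∂μ) +
      Lσ * D * |f (x, s) - f (x₀, s)|) (𝓝[Ω] x₀) (𝓝 0) := by
    have h2 : Tendsto (fun x => Lσ * D * |f (x, s) - f (x₀, s)|) (𝓝[Ω] x₀) (𝓝 0) := by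
      have := ((hfx.sub (tendsto_const_nhds (x := f (x₀, s)))).abs).const_mul (Lσ * D)
      simpa using this
    have h1 : Tendsto (fun x => Cσ * ∫ y in Ω, |K x y - K x₀ y| ∂μ) (𝓝[Ω] x₀) (𝓝 0) := by
      simpa using hKtend.const_mul Cσ
    simpa using h1.add h2
  rw [tendsto_iff_dist_tendsto_zero]
  apply squeeze_zero' _ _ hbound
  · filter_upwards with x
    exact dist_nonneg
  · filter_upwards [self_mem_nhdsWithin] with x hx
    rw [Real.dist_eq]
    exact hkey x hx


lemma uIcc_subset_Icc {τ a b : ℝ} (hτ : 0 ≤ τ) (ha : a ∈ Icc 0 τ) (hb : b ∈ Icc 0 τ) :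
    uIcc a b ⊆ Icc 0 τ := by
  rw [show Icc (0:ℝ) τ = uIcc 0 τ from (uIcc_of_le hτ).symm]
  exact uIcc_subset_uIcc (by simpa [uIcc_of_le hτ] using ha) (by simpa [uIcc_of_le hτ] using hb)

lemma G_intervalIntegrable (hΩmeas : MeasurableSet Ω) {x : α} (hKx : Measurable (K x))
    (hKxint : IntegrableOn (K x) Ω μ) (hKnn : ∀ y, 0 ≤ K x y)
    (hσc : Continuous σ) {Cσ : ℝ} (hσb : ∀ z, |σ z| ≤ Cσ)
    (hf : ContinuousOn f (Ω ×ˢ Icc 0 τ)) (hx : x ∈ Ω) (hτ : 0 ≤ τ)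
    {a b : ℝ} (ha : a ∈ Icc 0 τ) (hb : b ∈ Icc 0 τ) :
    IntervalIntegrable (fun s => Gop μ Ω K σ f x s) volume a b :=
  ((G_cont_s hΩmeas hKx hKxint hKnn hσc hσb hf hx).mono
    (uIcc_subset_Icc hτ ha hb)).intervalIntegrable

/-- Continuity of the Picard integral on `Ω ×ˢ Icc 0 τ`. -/
lemma P_cont (hΩmeas : MeasurableSet Ω)
    (hKx : ∀ x, Measurable (K x)) (hKint : ∀ x ∈ Ω, IntegrableOn (K x) Ω μ)
    (hKnn : ∀ x y, 0 ≤ K x y) {D : ℝ} (hD : ∀ x ∈ Ω, (∫ y in Ω, K x y ∂μ) ≤ D)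
    (hKtend : ∀ x₀ ∈ Ω,
      Tendsto (fun x => ∫ y in Ω, |K x y - K x₀ y| ∂μ) (𝓝[Ω] x₀) (𝓝 0))
    (hσc : Continuous σ) {Cσ : ℝ} (hCσ : 0 ≤ Cσ) (hσb : ∀ z, |σ z| ≤ Cσ)
    {Lσ : ℝ} (hLσ : 0 ≤ Lσ) (hσl : ∀ a b, |σ a - σ b| ≤ Lσ * |a - b|)
    (hf : ContinuousOn f (Ω ×ˢ Icc 0 τ)) (hτ : 0 ≤ τ) :
    ContinuousOn (fun p : α × ℝ => ∫ s in (0:ℝ)..p.2, Gop μ Ω K σ f p.1 s)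
      (Ω ×ˢ Icc 0 τ) := by
  rintro ⟨x₀, t₀⟩ hp
  obtain ⟨hx₀, ht₀⟩ := hp
  have h0mem : (0:ℝ) ∈ Icc 0 τ := ⟨le_refl _, hτ⟩
  -- eventual splitting
  have hsplit : ∀ᶠ p : α × ℝ in 𝓝[Ω ×ˢ Icc 0 τ] (x₀, t₀),
      (∫ s in (0:ℝ)..p.2, Gop μ Ω K σ f p.1 s) =
      (∫ s in (0:ℝ)..t₀, Gop μ Ω K σ f p.1 s) +
      ∫ s in t₀..p.2, Gop μ Ω K σ f p.1 s := by
    filter_upwards [self_mem_nhdsWithin] with p hpS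
    exact (intervalIntegral.integral_add_adjacent_intervals
      (G_intervalIntegrable hΩmeas (hKx p.1) (hKint p.1 hpS.1) (hKnn p.1) hσc hσb hf
        hpS.1 hτ h0mem ht₀)
      (G_intervalIntegrable hΩmeas (hKx p.1) (hKint p.1 hpS.1) (hKnn p.1) hσc hσb hf
        hpS.1 hτ ht₀ hpS.2)).symm
  have hfst : Tendsto (fun p : α × ℝ => p.1) (𝓝[Ω ×ˢ Icc 0 τ] (x₀, t₀)) (𝓝[Ω] x₀) := by
    apply tendsto_nhdsWithin_of_tendsto_nhds_of_eventually_within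
    · exact (continuous_fst.tendsto _).mono_left nhdsWithin_le_nhds
    · filter_upwards [self_mem_nhdsWithin] with p hpS
      exact hpS.1
  -- term A
  have hA' : Tendsto (fun x => ∫ s in (0:ℝ)..t₀, Gop μ Ω K σ f x s) (𝓝[Ω] x₀)
      (𝓝 (∫ s in (0:ℝ)..t₀, Gop μ Ω K σ f x₀ s)) := by
    apply intervalIntegral.tendsto_integral_filter_of_dominated_convergence
      (fun _ => Cσ * D)
    · filter_upwards [self_mem_nhdsWithin] with x hx
      apply ContinuousOn.aestronglyMeasurable _ measurableSet_uIoc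
      apply (G_cont_s hΩmeas (hKx x) (hKint x hx) (hKnn x) hσc hσb hf hx).mono
      rw [uIoc_of_le ht₀.1]
      exact (Ioc_subset_Icc_self).trans (Icc_subset_Icc (le_refl 0) ht₀.2)
    · filter_upwards [self_mem_nhdsWithin] with x hx
      filter_upwards with s
      intro hsmem
      rw [Real.norm_eq_abs]
      have hs' : s ∈ Icc 0 τ := by
        rw [uIoc_of_le ht₀.1] at hsmem
        exact ⟨le_of_lt hsmem.1, hsmem.2.trans ht₀.2⟩
      exact G_bound hΩmeas (hKx x) (hKint x hx) (hKnn x) (hD x hx) hσc hCσ hσb hf hs'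
    · exact intervalIntegrable_const
    · filter_upwards with s
      intro hsmem
      have hs' : s ∈ Icc 0 τ := by
        rw [uIoc_of_le ht₀.1] at hsmem
        exact ⟨le_of_lt hsmem.1, hsmem.2.trans ht₀.2⟩
      exact G_cont_x hΩmeas hKx hKint hKnn hD hx₀ (hKtend x₀ hx₀) hσc hCσ hσb hLσ hσl
        hf hs'
  have hA : Tendsto (fun p : α × ℝ => ∫ s in (0:ℝ)..t₀, Gop μ Ω K σ f p.1 s)
      (𝓝[Ω ×ˢ Icc 0 τ] (x₀, t₀)) (𝓝 (∫ s in (0:ℝ)..t₀, Gop μ Ω K σ f x₀ s)) :=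
    hA'.comp hfst
  -- term B
  have hB : Tendsto (fun p : α × ℝ => ∫ s in t₀..p.2, Gop μ Ω K σ f p.1 s)
      (𝓝[Ω ×ˢ Icc 0 τ] (x₀, t₀)) (𝓝 0) := by
    rw [tendsto_zero_iff_norm_tendsto_zero]
    have hbnd : Tendsto (fun p : α × ℝ => Cσ * D * |p.2 - t₀|)
        (𝓝[Ω ×ˢ Icc 0 τ] (x₀, t₀)) (𝓝 0) := by
      have h2 : Tendsto (fun p : α × ℝ => p.2) (𝓝[Ω ×ˢ Icc 0 τ] (x₀, t₀)) (𝓝 t₀) :=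
        (continuous_snd.tendsto _).mono_left nhdsWithin_le_nhds
      have := ((h2.sub (tendsto_const_nhds (x := t₀))).abs).const_mul (Cσ * D)
      simpa using this
    apply squeeze_zero' _ _ hbnd
    · filter_upwards with p
      exact norm_nonneg _
    · filter_upwards [self_mem_nhdsWithin] with p hpS
      apply intervalIntegral.norm_integral_le_of_norm_le_const
      intro s hsmem
      have hs' : s ∈ Icc 0 τ := by
        have h1 : Set.uIoc t₀ p.2 ⊆ Icc 0 τ :=
          uIoc_subset_uIcc.trans (uIcc_subset_Icc hτ ht₀ hpS.2)
        exact h1 hsmem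
      rw [Real.norm_eq_abs]
      exact G_bound hΩmeas (hKx p.1) (hKint p.1 hpS.1) (hKnn p.1) (hD p.1 hpS.1) hσc hCσ
        hσb hf hs'
  have := hA.add hB
  rw [add_zero] at this
  exact this.congr' (hsplit.mono fun p hp => hp.symm)

end G

section Extend

variable {β : Type*} [TopologicalSpace β]

open Classical in
noncomputable def extend (S : Set β) (f : ↥S →ᵇ ℝ) : β → ℝ :=
  fun p => if h : p ∈ S then f ⟨p, h⟩ else 0

lemma extend_eq {S : Set β} (f : ↥S →ᵇ ℝ) {p : β} (hp : p ∈ S) :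
    extend S f p = f ⟨p, hp⟩ := by
  unfold extend
  rw [dif_pos hp]

lemma continuousOn_extend (S : Set β) (f : ↥S →ᵇ ℝ) :
    ContinuousOn (extend S f) S := by
  rw [continuousOn_iff_continuous_restrict]
  have h : S.restrict (extend S f) = fun q => f q := by
    funext q
    exact extend_eq f q.2
  convert f.continuous using 1
  exact h

lemma abs_extend_sub_le {S : Set β} (f g : ↥S →ᵇ ℝ) {p : β} (hp : p ∈ S) :
    |extend S f p - extend S g p| ≤ dist f g := by
  rw [extend_eq f hp, extend_eq g hp, ← Real.dist_eq]
  exact BoundedContinuousFunction.dist_coe_le_dist _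

end Extend

section Fixed

variable {K : α → α → ℝ} {σ : ℝ → ℝ} {τ : ℝ}

/-- Existence of the Picard fixed point. -/
lemma exists_fixed (hΩmeas : MeasurableSet Ω)
    (hKx : ∀ x, Measurable (K x)) (hKint : ∀ x ∈ Ω, IntegrableOn (K x) Ω μ)
    (hKnn : ∀ x y, 0 ≤ K x y) {D : ℝ} (hD : ∀ x ∈ Ω, (∫ y in Ω, K x y ∂μ) ≤ D)
    (hD0 : 0 ≤ D)
    (hKtend : ∀ x₀ ∈ Ω,
      Tendsto (fun x => ∫ y in Ω, |K x y - K x₀ y| ∂μ) (𝓝[Ω] x₀) (𝓝 0))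
    (hσc : Continuous σ) {Cσ : ℝ} (hCσ : 0 ≤ Cσ) (hσb : ∀ z, |σ z| ≤ Cσ)
    {Lσ : ℝ} (hLσ : 0 ≤ Lσ) (hσl : ∀ a b, |σ a - σ b| ≤ Lσ * |a - b|)
    {u₀ : α → ℝ} (hu₀cont : ContinuousOn u₀ Ω) {M₀ : ℝ}
    (hu₀bd : ∀ x ∈ Ω, |u₀ x| ≤ M₀) (hM₀ : 0 ≤ M₀)
    (hτpos : 0 < τ) (hτC : τ * (Cσ * D) ≤ 1/2) (hτL : τ * (2 * Lσ * D) ≤ 1/2) :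
    ∃ w : α × ℝ → ℝ, ContinuousOn w (Ω ×ˢ Icc 0 τ) ∧
      (∀ p ∈ Ω ×ˢ Icc (0:ℝ) τ, |w p| ≤ M₀ + 1) ∧
      (∀ p ∈ Ω ×ˢ Icc (0:ℝ) τ,
        w p = u₀ p.1 + ∫ s in (0:ℝ)..p.2, Gop μ Ω K σ w p.1 s) := by
  -- the bound for the Picard map
  have hTbd : ∀ g : α × ℝ → ℝ, ContinuousOn g (Ω ×ˢ Icc 0 τ) →
      ∀ p : α × ℝ, p ∈ Ω ×ˢ Icc (0:ℝ) τ →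
      |u₀ p.1 + ∫ s in (0:ℝ)..p.2, Gop μ Ω K σ g p.1 s| ≤ M₀ + 1 := by
    intro g hg p hp
    have h1 : |∫ s in (0:ℝ)..p.2, Gop μ Ω K σ g p.1 s| ≤ (Cσ * D) * |p.2 - 0| := by
      rw [← Real.norm_eq_abs]
      apply intervalIntegral.norm_integral_le_of_norm_le_const
      intro s hs
      have hs' : s ∈ Icc 0 τ := by
        rw [uIoc_of_le hp.2.1] at hs
        exact ⟨hs.1.le, hs.2.trans hp.2.2⟩
      rw [Real.norm_eq_abs]
      exact G_bound hΩmeas (hKx p.1) (hKint p.1 hp.1) (hKnn p.1) (hD p.1 hp.1) hσc hCσ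
        hσb hg hs'
    have h2 : |p.2 - 0| ≤ τ := by
      rw [sub_zero, abs_of_nonneg hp.2.1]
      exact hp.2.2
    calc |u₀ p.1 + ∫ s in (0:ℝ)..p.2, Gop μ Ω K σ g p.1 s|
        ≤ |u₀ p.1| + |∫ s in (0:ℝ)..p.2, Gop μ Ω K σ g p.1 s| := abs_add_le _ _
      _ ≤ M₀ + (Cσ * D) * τ := add_le_add (hu₀bd p.1 hp.1)
          (h1.trans (mul_le_mul_of_nonneg_left h2 (by positivity)))
      _ ≤ M₀ + 1 := by nlinarith
  -- the Picard map
  let T : (↥(Ω ×ˢ Icc (0:ℝ) τ) →ᵇ ℝ) → (↥(Ω ×ˢ Icc (0:ℝ) τ) →ᵇ ℝ) := fun f =>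
    BoundedContinuousFunction.mkOfBound
      ⟨(Ω ×ˢ Icc (0:ℝ) τ).restrict
        (fun p => u₀ p.1 + ∫ s in (0:ℝ)..p.2, Gop μ Ω K σ (extend _ f) p.1 s),
        by
          refine continuousOn_iff_continuous_restrict.mp ?_
          apply ContinuousOn.add
          · exact hu₀cont.comp continuous_fst.continuousOn (fun p hp => hp.1)
          · exact P_cont hΩmeas hKx hKint hKnn hD hKtend hσc hCσ hσb hLσ hσl
              (continuousOn_extend _ f) hτpos.le⟩
      (2 * (M₀ + 1))
      (by
        intro q q'
        rw [Real.dist_eq]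
        have hb1 := hTbd (extend _ f) (continuousOn_extend _ f) q q.2
        have hb2 := hTbd (extend _ f) (continuousOn_extend _ f) q' q'.2
        calc |(Ω ×ˢ Icc (0:ℝ) τ).restrict
              (fun p => u₀ p.1 + ∫ s in (0:ℝ)..p.2, Gop μ Ω K σ (extend _ f) p.1 s) q -
            (Ω ×ˢ Icc (0:ℝ) τ).restrict
              (fun p => u₀ p.1 + ∫ s in (0:ℝ)..p.2, Gop μ Ω K σ (extend _ f) p.1 s) q'|
            ≤ |(Ω ×ˢ Icc (0:ℝ) τ).restrict
              (fun p => u₀ p.1 + ∫ s in (0:ℝ)..p.2, Gop μ Ω K σ (extend _ f) p.1 s) q| +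
              |(Ω ×ˢ Icc (0:ℝ) τ).restrict
              (fun p => u₀ p.1 + ∫ s in (0:ℝ)..p.2, Gop μ Ω K σ (extend _ f) p.1 s) q'| :=
              abs_sub _ _
          _ ≤ (M₀ + 1) + (M₀ + 1) := add_le_add hb1 hb2
          _ = 2 * (M₀ + 1) := by ring)
  have hTapp : ∀ (f : ↥(Ω ×ˢ Icc (0:ℝ) τ) →ᵇ ℝ) (q : ↥(Ω ×ˢ Icc (0:ℝ) τ)),
      T f q = u₀ (↑q : α × ℝ).1 +
        ∫ s in (0:ℝ)..(↑q : α × ℝ).2, Gop μ Ω K σ (extend _ f) (↑q : α × ℝ).1 s :=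
    fun f q => rfl
  -- contraction
  have hcontr : ContractingWith (1/2 : NNReal) T := by
    constructor
    · rw [← NNReal.coe_lt_coe]
      norm_num
    · apply LipschitzWith.of_dist_le_mul
      intro f g
      have hco : ((1/2 : NNReal) : ℝ) = 1/2 := by norm_num
      rw [hco]
      rw [BoundedContinuousFunction.dist_le (by positivity)]
      intro q
      rw [Real.dist_eq, hTapp f q, hTapp g q]
      have hq := q.2
      have hint1 : IntervalIntegrable (fun s => Gop μ Ω K σ (extend _ f) (↑q : α × ℝ).1 s)
          volume 0 (↑q : α × ℝ).2 :=
        G_intervalIntegrable hΩmeas (hKx _) (hKint _ hq.1) (hKnn _) hσc hσb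
          (continuousOn_extend _ f) hq.1 hτpos.le ⟨le_refl _, hτpos.le⟩ hq.2
      have hint2 : IntervalIntegrable (fun s => Gop μ Ω K σ (extend _ g) (↑q : α × ℝ).1 s)
          volume 0 (↑q : α × ℝ).2 :=
        G_intervalIntegrable hΩmeas (hKx _) (hKint _ hq.1) (hKnn _) hσc hσb
          (continuousOn_extend _ g) hq.1 hτpos.le ⟨le_refl _, hτpos.le⟩ hq.2
      have heq : u₀ (↑q : α × ℝ).1 +
          (∫ s in (0:ℝ)..(↑q : α × ℝ).2, Gop μ Ω K σ (extend _ f) (↑q : α × ℝ).1 s) -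
          (u₀ (↑q : α × ℝ).1 +
          ∫ s in (0:ℝ)..(↑q : α × ℝ).2, Gop μ Ω K σ (extend _ g) (↑q : α × ℝ).1 s) =
          ∫ s in (0:ℝ)..(↑q : α × ℝ).2,
            (Gop μ Ω K σ (extend _ f) (↑q : α × ℝ).1 s -
             Gop μ Ω K σ (extend _ g) (↑q : α × ℝ).1 s) := by
        rw [intervalIntegral.integral_sub hint1 hint2]
        ring
      rw [heq, ← Real.norm_eq_abs]
      have hbd : ∀ s ∈ Set.uIoc (0:ℝ) (↑q : α × ℝ).2,
          ‖Gop μ Ω K σ (extend _ f) (↑q : α × ℝ).1 s -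
           Gop μ Ω K σ (extend _ g) (↑q : α × ℝ).1 s‖ ≤ Lσ * (2 * dist f g) * D := by
        intro s hs
        have hs' : s ∈ Icc 0 τ := by
          rw [uIoc_of_le hq.2.1] at hs
          exact ⟨hs.1.le, hs.2.trans hq.2.2⟩
        rw [Real.norm_eq_abs]
        exact G_diff hΩmeas (hKx _) (hKint _ hq.1) (hKnn _) (hD _ hq.1) hD0 hσc hσb hLσ
          hσl (continuousOn_extend _ f) (continuousOn_extend _ g) hs' dist_nonneg hq.1
          (fun z hz => abs_extend_sub_le f g (mk_mem_prod hz hs'))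
      calc ‖∫ s in (0:ℝ)..(↑q : α × ℝ).2,
            (Gop μ Ω K σ (extend _ f) (↑q : α × ℝ).1 s -
             Gop μ Ω K σ (extend _ g) (↑q : α × ℝ).1 s)‖
          ≤ (Lσ * (2 * dist f g) * D) * |(↑q : α × ℝ).2 - 0| :=
            intervalIntegral.norm_integral_le_of_norm_le_const hbd
        _ ≤ (Lσ * (2 * dist f g) * D) * τ := by
            apply mul_le_mul_of_nonneg_left _ (by positivity)
            rw [sub_zero, abs_of_nonneg hq.2.1]
            exact hq.2.2
        _ ≤ 1/2 * dist f g := by nlinarith [dist_nonneg (x := f) (y := g)]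
  -- fixed point
  have hfp : T (ContractingWith.fixedPoint T hcontr) = ContractingWith.fixedPoint T hcontr :=
    hcontr.fixedPoint_isFixedPt
  set w' := ContractingWith.fixedPoint T hcontr with hw'def
  have hkey : ∀ p (hp : p ∈ Ω ×ˢ Icc (0:ℝ) τ), extend (Ω ×ˢ Icc (0:ℝ) τ) w' p =
      u₀ p.1 + ∫ s in (0:ℝ)..p.2, Gop μ Ω K σ (extend (Ω ×ˢ Icc (0:ℝ) τ) w') p.1 s := by
    intro p hp
    have h1 : extend (Ω ×ˢ Icc (0:ℝ) τ) w' p = T w' ⟨p, hp⟩ := by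
      rw [hfp]
      exact extend_eq w' hp
    rw [h1, hTapp]
  refine ⟨extend (Ω ×ˢ Icc (0:ℝ) τ) w', continuousOn_extend _ w', ?_, fun p hp => hkey p hp⟩
  intro p hp
  rw [hkey p hp]
  exact hTbd (extend _ w') (continuousOn_extend _ w') p hp


/-- Grönwall-type uniqueness. -/
lemma gronwall_unique (hΩmeas : MeasurableSet Ω)
    (hKx : ∀ x, Measurable (K x)) (hKint : ∀ x ∈ Ω, IntegrableOn (K x) Ω μ)
    (hKnn : ∀ x y, 0 ≤ K x y) {D : ℝ} (hD : ∀ x ∈ Ω, (∫ y in Ω, K x y ∂μ) ≤ D)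
    (hD0 : 0 ≤ D)
    (hσc : Continuous σ) {Cσ : ℝ} (hσb : ∀ z, |σ z| ≤ Cσ)
    {Lσ : ℝ} (hLσ : 0 ≤ Lσ) (hσl : ∀ a b, |σ a - σ b| ≤ Lσ * |a - b|)
    (hτpos : 0 < τ)
    {f g : α × ℝ → ℝ} (hf : ContinuousOn f (Ω ×ˢ Icc 0 τ))
    (hg : ContinuousOn g (Ω ×ˢ Icc 0 τ))
    {B : ℝ} (hB : 0 ≤ B) (hbd : ∀ p ∈ Ω ×ˢ Icc (0:ℝ) τ, |f p - g p| ≤ B)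
    (heq : ∀ x ∈ Ω, ∀ t ∈ Icc (0:ℝ) τ, f (x, t) - g (x, t) =
      ∫ s in (0:ℝ)..t, (Gop μ Ω K σ f x s - Gop μ Ω K σ g x s)) :
    ∀ x ∈ Ω, ∀ t ∈ Icc (0:ℝ) τ, f (x, t) = g (x, t) := by
  set c : ℝ := 2 * Lσ * D with hcdef
  have hc0 : 0 ≤ c := by positivity
  have hiter : ∀ k : ℕ, ∀ t ∈ Icc (0:ℝ) τ, ∀ x ∈ Ω,
      |f (x, t) - g (x, t)| ≤ B * (c * t) ^ k / (Nat.factorial k : ℝ) := by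
    intro k
    induction k with
    | zero =>
      intro t ht x hx
      simpa using hbd (x, t) (mk_mem_prod hx ht)
    | succ k ih =>
      intro t ht x hx
      rw [heq x hx t ht, ← Real.norm_eq_abs]
      have hbound : ∀ᵐ s ∂(volume.restrict (Set.uIoc (0:ℝ) t)),
          ‖Gop μ Ω K σ f x s - Gop μ Ω K σ g x s‖ ≤
            c * (B * (c * s) ^ k / (Nat.factorial k : ℝ)) := by
        filter_upwards [ae_restrict_mem measurableSet_uIoc] with s hs
        rw [uIoc_of_le ht.1] at hs
        have hs' : s ∈ Icc 0 τ := ⟨hs.1.le, hs.2.trans ht.2⟩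
        have hδ0 : 0 ≤ B * (c * s) ^ k / (Nat.factorial k : ℝ) := by
          have : 0 ≤ c * s := mul_nonneg hc0 hs.1.le
          positivity
        rw [Real.norm_eq_abs]
        calc |Gop μ Ω K σ f x s - Gop μ Ω K σ g x s|
            ≤ Lσ * (2 * (B * (c * s) ^ k / (Nat.factorial k : ℝ))) * D :=
              G_diff hΩmeas (hKx x) (hKint x hx) (hKnn x) (hD x hx) hD0 hσc hσb hLσ hσl
                hf hg hs' hδ0 hx (fun z hz => ih s hs' z hz)
          _ = c * (B * (c * s) ^ k / (Nat.factorial k : ℝ)) := by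
              rw [hcdef]; ring
      have hcont : IntervalIntegrable
          (fun s => c * (B * (c * s) ^ k / (Nat.factorial k : ℝ))) volume 0 t := by
        apply Continuous.intervalIntegrable
        fun_prop
      have hle := intervalIntegral.norm_integral_le_abs_of_norm_le hbound hcont
      have heval : (∫ s in (0:ℝ)..t, c * (B * (c * s) ^ k / (Nat.factorial k : ℝ))) =
          B * (c * t) ^ (k + 1) / (Nat.factorial (k + 1) : ℝ) := by
        have h1 : ∀ s : ℝ, c * (B * (c * s) ^ k / (Nat.factorial k : ℝ)) =
            (c ^ (k + 1) * B / (Nat.factorial k : ℝ)) * s ^ k := by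
          intro s
          rw [mul_pow]
          ring
        simp_rw [h1]
        rw [intervalIntegral.integral_const_mul, integral_pow, Nat.factorial_succ]
        have hfk : (0:ℝ) < (Nat.factorial k : ℝ) := by
          exact_mod_cast Nat.factorial_pos k
        push_cast
        rw [mul_pow]
        field_simp
        ring
      refine hle.trans ?_
      rw [heval]
      rw [abs_of_nonneg ?_]
      have hct : 0 ≤ c * t := mul_nonneg hc0 ht.1
      positivity
  intro x hx t ht
  have hk : ∀ k : ℕ, |f (x, t) - g (x, t)| ≤ B * (c * τ) ^ k / (Nat.factorial k : ℝ) := by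
    intro k
    refine (hiter k t ht x hx).trans ?_
    have hct : 0 ≤ c * t := mul_nonneg hc0 ht.1
    have hcc : c * t ≤ c * τ := mul_le_mul_of_nonneg_left ht.2 hc0
    gcongr
  have hlim : Tendsto (fun k : ℕ => B * (c * τ) ^ k / (Nat.factorial k : ℝ)) atTop (𝓝 0) := by
    have h := (FloorSemiring.tendsto_pow_div_factorial_atTop (c * τ)).const_mul B
    simp only [mul_zero] at h
    apply h.congr
    intro k
    rw [mul_div_assoc]
  have h0 : |f (x, t) - g (x, t)| ≤ 0 := ge_of_tendsto' hlim hk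
  have := le_antisymm h0 (abs_nonneg _)
  rw [abs_eq_zero, sub_eq_zero] at this
  exact this

end Fixed

end S2Aux

open S2Aux

/-- Short time existence and uniqueness.  Given an admissible kernel `K`,
a recognition function `ρ` and bounded continuous initial datum `u₀`, there is a `τ > 0`
for which there is exactly one bounded continuous `u : Ω × [0,τ] → ℝ` satisfying
`u(x,t) = u₀(x) + ∫₀ᵗ g[u](x,s) ds` on `Ω × [0,τ]`. -/
theorem statement2
    (n : ℕ) (Ω : Set (EuclideanSpace ℝ (Fin n)))
    (hΩne : Ω.Nonempty) (hΩmeas : MeasurableSet Ω)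
    -- `K` is an admissible kernel:
    (K : EuclideanSpace ℝ (Fin n) → EuclideanSpace ℝ (Fin n) → ℝ)
    (hKnonneg : ∀ x y, 0 ≤ K x y)
    (hKmeas : Measurable (Function.uncurry K))
    (hKint : ∀ x ∈ Ω, IntegrableOn (K x) Ω)
    (hKcont : ∀ x ∈ Ω, ∀ ε > (0:ℝ), ∃ δ > (0:ℝ), ∀ x' ∈ Ω, dist x' x < δ →
        (∫ y in Ω, |K x' y - K x y|) < ε)
    (D : ℝ) (hD : ∀ x ∈ Ω, (∫ y in Ω, K x y) ≤ D)
    -- `ρ` is a recognition function: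
    (ρ : ℝ → ℝ) (hρ : Differentiable ℝ ρ)
    (hρ'lip : ∀ R : ℝ, 0 < R → ∃ L : ℝ, ∀ a b : ℝ, |a| ≤ R → |b| ≤ R →
        |deriv ρ a - deriv ρ b| ≤ L * |a - b|)
    -- `u₀` bounded and continuous on `Ω`:
    (u₀ : EuclideanSpace ℝ (Fin n) → ℝ)
    (hu₀cont : ContinuousOn u₀ Ω) (M₀ : ℝ) (hu₀bd : ∀ x ∈ Ω, |u₀ x| ≤ M₀) :
    ∃ τ > (0:ℝ), ∃ u : EuclideanSpace ℝ (Fin n) → ℝ → ℝ,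
      (ContinuousOn (fun p : EuclideanSpace ℝ (Fin n) × ℝ => u p.1 p.2) (Ω ×ˢ Icc 0 τ) ∧
       (∃ M : ℝ, ∀ x ∈ Ω, ∀ t ∈ Icc (0:ℝ) τ, |u x t| ≤ M) ∧
       (∀ x ∈ Ω, ∀ t ∈ Icc (0:ℝ) τ,
          u x t = u₀ x + ∫ s in (0:ℝ)..t, ∫ y in Ω, K x y * deriv ρ (u x s - u y s))) ∧
      (∀ v : EuclideanSpace ℝ (Fin n) → ℝ → ℝ,
        ContinuousOn (fun p : EuclideanSpace ℝ (Fin n) × ℝ => v p.1 p.2) (Ω ×ˢ Icc 0 τ) →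
        (∃ M : ℝ, ∀ x ∈ Ω, ∀ t ∈ Icc (0:ℝ) τ, |v x t| ≤ M) →
        (∀ x ∈ Ω, ∀ t ∈ Icc (0:ℝ) τ,
          v x t = u₀ x + ∫ s in (0:ℝ)..t, ∫ y in Ω, K x y * deriv ρ (v x s - v y s)) →
        ∀ x ∈ Ω, ∀ t ∈ Icc (0:ℝ) τ, v x t = u x t) := by  classical
  obtain ⟨x₀, hx₀⟩ := hΩne
  have hKx : ∀ x, Measurable (K x) := fun x => hKmeas.comp measurable_prodMk_left
  have hM₀ : 0 ≤ M₀ := le_trans (abs_nonneg _) (hu₀bd x₀ hx₀)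
  have hD0 : 0 ≤ D :=
    le_trans (setIntegral_nonneg hΩmeas fun y _ => hKnonneg x₀ y) (hD x₀ hx₀)
  have hKtend : ∀ z ∈ Ω, Filter.Tendsto (fun x => ∫ y in Ω, |K x y - K z y|)
      (nhdsWithin z Ω) (nhds 0) := by
    intro z hz
    rw [Metric.tendsto_nhdsWithin_nhds]
    intro ε hε
    obtain ⟨δ, hδ, hh⟩ := hKcont z hz ε hε
    refine ⟨δ, hδ, fun {x} hx hdist => ?_⟩
    rw [Real.dist_eq, sub_zero,
      abs_of_nonneg (integral_nonneg fun y => abs_nonneg _)]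
    exact hh x hx hdist
  -- continuity of the derivative
  have hρ'cont : Continuous (deriv ρ) := by
    rw [continuous_iff_continuousAt]
    intro a
    obtain ⟨L, hL⟩ := hρ'lip (|a| + 1) (by positivity)
    have hL0 : ∀ b c : ℝ, |b| ≤ |a| + 1 → |c| ≤ |a| + 1 →
        |deriv ρ b - deriv ρ c| ≤ (max L 0) * |b - c| := fun b c hb hc =>
      (hL b c hb hc).trans (mul_le_mul_of_nonneg_right (le_max_left _ _) (abs_nonneg _))
    rw [Metric.continuousAt_iff]
    intro ε hε
    refine ⟨min 1 (ε / (max L 0 + 1)), by positivity, ?_⟩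
    intro b hb
    rw [Real.dist_eq] at hb ⊢
    have hb1 : |b - a| < 1 := lt_of_lt_of_le hb (min_le_left _ _)
    have hb2 : |b - a| < ε / (max L 0 + 1) := lt_of_lt_of_le hb (min_le_right _ _)
    have hba : |b| ≤ |a| + 1 := by
      calc |b| = |a + (b - a)| := by ring_nf
        _ ≤ |a| + |b - a| := abs_add_le _ _
        _ ≤ |a| + 1 := by linarith
    have hmain := hL0 b a hba (by linarith [abs_nonneg a])
    have hmax : (0:ℝ) ≤ max L 0 := le_max_right _ _
    have h3 : (max L 0 + 1) * |b - a| < ε := by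
      rw [← lt_div_iff₀' (by positivity : (0:ℝ) < max L 0 + 1)]
      exact hb2
    calc |deriv ρ b - deriv ρ a| ≤ (max L 0) * |b - a| := hmain
      _ < ε := by nlinarith [abs_nonneg (b - a)]
  -- truncated derivative builder
  have hσmk : ∀ R : ℝ, 0 < R → ∃ Lσ Cσ : ℝ, 0 ≤ Lσ ∧ 0 ≤ Cσ ∧
      (∀ z : ℝ, |z| ≤ R → deriv ρ (clamp R z) = deriv ρ z) ∧
      Continuous (fun z => deriv ρ (clamp R z)) ∧
      (∀ z : ℝ, |deriv ρ (clamp R z)| ≤ Cσ) ∧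
      (∀ a b : ℝ, |deriv ρ (clamp R a) - deriv ρ (clamp R b)| ≤ Lσ * |a - b|) := by
    intro R hR
    obtain ⟨L, hL⟩ := hρ'lip R hR
    have hL'0 : (0:ℝ) ≤ max L 0 := le_max_right _ _
    have hL' : ∀ a b : ℝ, |a| ≤ R → |b| ≤ R →
        |deriv ρ a - deriv ρ b| ≤ (max L 0) * |a - b| := fun a b ha hb =>
      (hL a b ha hb).trans (mul_le_mul_of_nonneg_right (le_max_left _ _) (abs_nonneg _))
    refine ⟨max L 0, |deriv ρ 0| + (max L 0) * R, hL'0, by positivity, ?_, ?_, ?_, ?_⟩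
    · intro z hz
      rw [clamp_eq_self hz]
    · exact hρ'cont.comp (continuous_clamp R)
    · intro z
      have h2 : |clamp R z| ≤ R := clamp_abs_le hR.le z
      have h1 : |deriv ρ (clamp R z) - deriv ρ 0| ≤ (max L 0) * |clamp R z - 0| :=
        hL' _ _ h2 (by simpa using hR.le)
      have h4 : (max L 0) * |clamp R z - 0| ≤ (max L 0) * R := by
        apply mul_le_mul_of_nonneg_left _ hL'0
        simpa using h2
      calc |deriv ρ (clamp R z)|
          = |(deriv ρ (clamp R z) - deriv ρ 0) + deriv ρ 0| := by ring_nf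
        _ ≤ |deriv ρ (clamp R z) - deriv ρ 0| + |deriv ρ 0| := abs_add_le _ _
        _ ≤ |deriv ρ 0| + (max L 0) * R := by linarith
    · intro a b
      calc |deriv ρ (clamp R a) - deriv ρ (clamp R b)|
          ≤ (max L 0) * |clamp R a - clamp R b| :=
            hL' _ _ (clamp_abs_le hR.le a) (clamp_abs_le hR.le b)
        _ ≤ (max L 0) * |a - b| :=
            mul_le_mul_of_nonneg_left (clamp_lip R a b) hL'0
  obtain ⟨L₁, C₁, hL₁0, hC₁0, hσ₁eq, hσ₁c, hσ₁b, hσ₁l⟩ :=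
    hσmk (2 * (M₀ + 1)) (by linarith)
  have hD' : ∀ x ∈ Ω, (∫ y in Ω, K x y) ≤ D + 1 := fun x hx => (hD x hx).trans (by linarith)
  have hD'0 : (0:ℝ) ≤ D + 1 := by linarith
  set τ : ℝ := min (1 / (2 * (D + 1) * C₁ + 1)) (1 / (4 * (D + 1) * L₁ + 1)) with hτdef
  have hτpos : 0 < τ := lt_min (by positivity) (by positivity)
  have hτC : τ * (C₁ * (D + 1)) ≤ 1 / 2 := by
    have h1 : τ ≤ 1 / (2 * (D + 1) * C₁ + 1) := min_le_left _ _
    have h2 : (0:ℝ) < 2 * (D + 1) * C₁ + 1 := by positivity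
    have h3 : τ * (2 * (D + 1) * C₁ + 1) ≤ 1 := by
      calc τ * (2 * (D + 1) * C₁ + 1)
          ≤ (1 / (2 * (D + 1) * C₁ + 1)) * (2 * (D + 1) * C₁ + 1) :=
            mul_le_mul_of_nonneg_right h1 h2.le
        _ = 1 := by field_simp
    nlinarith [hτpos.le]
  have hτL : τ * (2 * L₁ * (D + 1)) ≤ 1 / 2 := by
    have h1 : τ ≤ 1 / (4 * (D + 1) * L₁ + 1) := min_le_right _ _
    have h2 : (0:ℝ) < 4 * (D + 1) * L₁ + 1 := by positivity
    have h3 : τ * (4 * (D + 1) * L₁ + 1) ≤ 1 := by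
      calc τ * (4 * (D + 1) * L₁ + 1)
          ≤ (1 / (4 * (D + 1) * L₁ + 1)) * (4 * (D + 1) * L₁ + 1) :=
            mul_le_mul_of_nonneg_right h1 h2.le
        _ = 1 := by field_simp
    nlinarith [hτpos.le]
  obtain ⟨w, hwcont, hwbd, hweq⟩ :=
    exists_fixed (μ := volume) hΩmeas hKx hKint hKnonneg hD' hD'0 hKtend hσ₁c hC₁0 hσ₁b
      hL₁0 hσ₁l hu₀cont hu₀bd hM₀ hτpos hτC hτL
  -- congruence between the truncated and the genuine equation
  have hcongr : ∀ (R' : ℝ), 0 < R' → ∀ (g : EuclideanSpace ℝ (Fin n) × ℝ → ℝ),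
      (∀ p ∈ Ω ×ˢ Icc (0:ℝ) τ, |g p| ≤ R' / 2) → ∀ x ∈ Ω, ∀ t ∈ Icc (0:ℝ) τ,
      (∫ s in (0:ℝ)..t, Gop volume Ω K (fun z => deriv ρ (clamp R' z)) g x s) =
      ∫ s in (0:ℝ)..t, ∫ y in Ω, K x y * deriv ρ (g (x, s) - g (y, s)) := by
    intro R' hR' g hgbd x hx t ht
    apply intervalIntegral.integral_congr
    intro s hs
    have hs' : s ∈ Icc 0 τ := uIcc_subset_Icc hτpos.le ⟨le_refl _, hτpos.le⟩ ht hs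
    unfold Gop
    apply setIntegral_congr_fun hΩmeas
    intro y hy
    have h1 : |g (x, s) - g (y, s)| ≤ R' := by
      calc |g (x, s) - g (y, s)| ≤ |g (x, s)| + |g (y, s)| := abs_sub _ _
        _ ≤ R' / 2 + R' / 2 :=
            add_le_add (hgbd _ (mk_mem_prod hx hs')) (hgbd _ (mk_mem_prod hy hs'))
        _ = R' := by ring
    show K x y * deriv ρ (clamp R' (g (x, s) - g (y, s))) =
      K x y * deriv ρ (g (x, s) - g (y, s))
    rw [clamp_eq_self h1]
  -- the genuine equation for `w`
  have hweqρ : ∀ x ∈ Ω, ∀ t ∈ Icc (0:ℝ) τ, w (x, t) =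
      u₀ x + ∫ s in (0:ℝ)..t, ∫ y in Ω, K x y * deriv ρ (w (x, s) - w (y, s)) := by
    intro x hx t ht
    rw [hweq (x, t) (mk_mem_prod hx ht)]
    congr 1
    exact hcongr (2 * (M₀ + 1)) (by linarith) w
      (fun p hp => by have := hwbd p hp; linarith) x hx t ht
  refine ⟨τ, hτpos, fun x t => w (x, t), ⟨?_, ⟨M₀ + 1, ?_⟩, ?_⟩, ?_⟩
  · exact hwcont
  · intro x hx t ht
    exact hwbd (x, t) (mk_mem_prod hx ht)
  · intro x hx t ht
    exact hweqρ x hx t ht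
  -- uniqueness
  intro v hvcont hvM hveq x hx t ht
  obtain ⟨M, hvbd⟩ := hvM
  have hM₂pos : (0:ℝ) < max M (M₀ + 1) := lt_of_lt_of_le (by linarith) (le_max_right _ _)
  set M₂ : ℝ := max M (M₀ + 1) with hM₂def
  set R₂ : ℝ := 2 * M₂ + 1 with hR₂def
  have hR₂pos : 0 < R₂ := by positivity
  obtain ⟨L₂, C₂, hL₂0, hC₂0, hσ₂eq, hσ₂c, hσ₂b, hσ₂l⟩ := hσmk R₂ hR₂pos
  have hfvcont : ContinuousOn (fun p : EuclideanSpace ℝ (Fin n) × ℝ => v p.1 p.2)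
      (Ω ×ˢ Icc 0 τ) := hvcont
  have hfvbd : ∀ p ∈ Ω ×ˢ Icc (0:ℝ) τ,
      |(fun p : EuclideanSpace ℝ (Fin n) × ℝ => v p.1 p.2) p| ≤ R₂ / 2 := by
    intro p hp
    have h1 := hvbd p.1 hp.1 p.2 hp.2
    have h2 : M ≤ M₂ := le_max_left _ _
    simp only []
    rw [hR₂def]
    linarith
  have hwbd₂ : ∀ p ∈ Ω ×ˢ Icc (0:ℝ) τ, |w p| ≤ R₂ / 2 := by
    intro p hp
    have h1 := hwbd p hp
    have h2 : M₀ + 1 ≤ M₂ := le_max_right _ _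
    rw [hR₂def]
    linarith
  have hveq₂ : ∀ x' ∈ Ω, ∀ t' ∈ Icc (0:ℝ) τ,
      (fun p : EuclideanSpace ℝ (Fin n) × ℝ => v p.1 p.2) (x', t') =
      u₀ x' + ∫ s in (0:ℝ)..t', Gop volume Ω K (fun z => deriv ρ (clamp R₂ z))
        (fun p : EuclideanSpace ℝ (Fin n) × ℝ => v p.1 p.2) x' s := by
    intro x' hx' t' ht'
    have hc := hcongr R₂ hR₂pos (fun p : EuclideanSpace ℝ (Fin n) × ℝ => v p.1 p.2)
      hfvbd x' hx' t' ht'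
    show v x' t' = _
    rw [hveq x' hx' t' ht', hc]
  have hueq₂ : ∀ x' ∈ Ω, ∀ t' ∈ Icc (0:ℝ) τ, w (x', t') =
      u₀ x' + ∫ s in (0:ℝ)..t', Gop volume Ω K (fun z => deriv ρ (clamp R₂ z)) w x' s := by
    intro x' hx' t' ht'
    have hc := hcongr R₂ hR₂pos w hwbd₂ x' hx' t' ht'
    rw [hweqρ x' hx' t' ht', hc]
  have hdiff : ∀ x' ∈ Ω, ∀ t' ∈ Icc (0:ℝ) τ,
      (fun p : EuclideanSpace ℝ (Fin n) × ℝ => v p.1 p.2) (x', t') - w (x', t') =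
      ∫ s in (0:ℝ)..t',
        (Gop volume Ω K (fun z => deriv ρ (clamp R₂ z))
          (fun p : EuclideanSpace ℝ (Fin n) × ℝ => v p.1 p.2) x' s -
         Gop volume Ω K (fun z => deriv ρ (clamp R₂ z)) w x' s) := by
    intro x' hx' t' ht'
    rw [hveq₂ x' hx' t' ht', hueq₂ x' hx' t' ht']
    rw [intervalIntegral.integral_sub
      (G_intervalIntegrable hΩmeas (hKx x') (hKint x' hx') (hKnonneg x') hσ₂c hσ₂b
        hfvcont hx' hτpos.le ⟨le_refl _, hτpos.le⟩ ht')
      (G_intervalIntegrable hΩmeas (hKx x') (hKint x' hx') (hKnonneg x') hσ₂c hσ₂b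
        hwcont hx' hτpos.le ⟨le_refl _, hτpos.le⟩ ht')]
    ring
  have huniq := gronwall_unique (μ := volume) hΩmeas hKx hKint hKnonneg hD' hD'0 hσ₂c
    hσ₂b hL₂0 hσ₂l hτpos hfvcont hwcont (B := R₂) hR₂pos.le
    (fun p hp => by
      calc |(fun p : EuclideanSpace ℝ (Fin n) × ℝ => v p.1 p.2) p - w p|
          ≤ |(fun p : EuclideanSpace ℝ (Fin n) × ℝ => v p.1 p.2) p| + |w p| := abs_sub _ _
        _ ≤ R₂ / 2 + R₂ / 2 := add_le_add (hfvbd p hp) (hwbd₂ p hp)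
        _ = R₂ := by ring)
    hdiff
  exact huniq x hx t ht
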